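/- Let λ be a complex-analytic function on an open neighborhood of 0 in ℂ such that λ(s) is real for all real s in that neighborhood, λ(0) = 0, λ'(0) > 0 and λ''(0) < 0. Then there exist constants C, δ, κ⋆ > 0 such that for every s ∈ ℂ with 0 < |s| ≤ δ and Re s ≥ −κ⋆ (Im s)² one has λ(s) ≠ 0 and |λ(s)|² ≤ C · Re λ(s). -/

import Mathlib

set_option maxHeartbeats 2000000

open Complex

lemma im_deriv_eq_zero (g : ℂ → ℂ) (U : Set ℂ) (hU : IsOpen U)
    (hg : ∀ z ∈ U, DifferentiableAt ℂ g z)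
    (hre : ∀ s : ℝ, (s : ℂ) ∈ U → (g s).im = 0)
    (t : ℝ) (ht : (t : ℂ) ∈ U) : (deriv g t).im = 0 := by
  have h1 : HasDerivAt (fun x : ℝ => g x) (deriv g t) t :=
    ((hg _ ht).hasDerivAt).comp_ofReal
  have h2 : HasDerivAt (fun x : ℝ => (g x).im) (deriv g t).im t :=
    (Complex.imCLM.hasFDerivAt.comp_hasDerivAt t h1)
  have hmem : {x : ℝ | (x : ℂ) ∈ U} ∈ nhds t :=
    (hU.preimage Complex.continuous_ofReal).mem_nhds ht
  have h3 : (fun x : ℝ => (g x).im) =ᶠ[nhds t] fun _ => 0 := by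
    filter_upwards [hmem] with x hx using hre x hx
  have h4 : HasDerivAt (fun _ : ℝ => (0:ℝ)) (deriv g t).im t := h2.congr_of_eventuallyEq h3.symm
  exact h4.unique (hasDerivAt_const t 0)

lemma core_est (A β Cr : ℝ) (hA : 0 < A) (hβ : 0 < β) (hCr : 0 ≤ Cr) :
    ∃ c : ℝ, 0 < c ∧ ∃ δ0 : ℝ, 0 < δ0 ∧ δ0 ≤ 1 ∧
    ∀ δ x y : ℝ, 0 < δ → δ ≤ δ0 → x^2 + y^2 ≤ δ^2 → -(β/(4*A)) * y^2 ≤ x →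
      c * (max x 0 + y^2) ≤ A*x - β*x^2 + β*y^2 - Cr*δ*(x^2+y^2) := by
  set κ : ℝ := β/(4*A) with hκdef
  have hκ : 0 < κ := by positivity
  have hAκ : A * κ = β/4 := by rw [hκdef]; field_simp
  refine ⟨min (A/2) (β/4), by positivity,
    min 1 (min (A/(2*(β+Cr+1))) (min (β/(2*(Cr+1))) (β/(2*((β+Cr)*κ^2+Cr+1))))),
    by positivity, min_le_left _ _, ?_⟩
  intro δ x y hδ hδ0 hs hreg
  set c : ℝ := min (A/2) (β/4) with hcdef
  have hc1 : c ≤ A/2 := min_le_left _ _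
  have hc2 : c ≤ β/4 := min_le_right _ _
  have hδ1 : δ ≤ 1 := hδ0.trans (min_le_left _ _)
  have hδA : (β+Cr+1)*δ ≤ A/2 := by
    have h := hδ0.trans ((min_le_right _ _).trans (min_le_left _ _))
    rw [le_div_iff₀ (by positivity)] at h; linarith
  have hδB : (Cr+1)*δ ≤ β/2 := by
    have h := hδ0.trans ((min_le_right _ _).trans ((min_le_right _ _).trans (min_le_left _ _)))
    rw [le_div_iff₀ (by positivity)] at h; linarith
  have hδC : ((β+Cr)*κ^2+Cr+1)*δ ≤ β/2 := by
    have h := hδ0.trans ((min_le_right _ _).trans ((min_le_right _ _).trans (min_le_right _ _)))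
    rw [le_div_iff₀ (by positivity)] at h; linarith
  have hy2 : y^2 ≤ δ^2 := by nlinarith [sq_nonneg x]
  have hxδ : x ≤ δ := by nlinarith [sq_nonneg (x - δ), sq_nonneg y]
  have hδ2 : δ^2 ≤ δ := by nlinarith
  have hδ3 : δ^3 ≤ δ := by nlinarith [sq_nonneg δ]
  rcases le_or_gt 0 x with hx | hx
  · rw [max_eq_left hx]
    have hx2 : x^2 ≤ δ * x := by nlinarith
    have h1 : c * x ≤ A/2 * x := mul_le_mul_of_nonneg_right hc1 hx
    have h2 : (β+Cr+1)*δ*x ≤ A/2*x := mul_le_mul_of_nonneg_right hδA hx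
    have h3 : β * x^2 ≤ β * (δ*x) := mul_le_mul_of_nonneg_left hx2 hβ.le
    have h4 : Cr*δ*x^2 ≤ Cr*δ*(δ*x) := mul_le_mul_of_nonneg_left hx2 (by positivity)
    have h4' : Cr*δ*(δ*x) ≤ Cr*δ*x := by
      have t := mul_le_mul_of_nonneg_left hδ2 (mul_nonneg hCr hx)
      linarith
    have h5 : c * y^2 ≤ β/4 * y^2 := mul_le_mul_of_nonneg_right hc2 (sq_nonneg y)
    have h6 : (Cr+1)*δ*y^2 ≤ β/2*y^2 := mul_le_mul_of_nonneg_right hδB (sq_nonneg y)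
    have h7 : 0 ≤ δ*x := mul_nonneg hδ.le hx
    have h8 : 0 ≤ δ*y^2 := mul_nonneg hδ.le (sq_nonneg y)
    have h9 : 0 ≤ β*y^2 := mul_nonneg hβ.le (sq_nonneg y)
    linarith
  · rw [max_eq_right hx.le]
    have hnx : -x ≤ κ * y^2 := by linarith
    have hx2 : x^2 ≤ κ^2 * y^2 * y^2 := by
      have := mul_self_le_mul_self (neg_nonneg.2 hx.le) hnx
      nlinarith
    have hx2' : x^2 ≤ κ^2 * δ^2 * y^2 := by
      have t := mul_le_mul_of_nonneg_left hy2 (by positivity : (0:ℝ) ≤ κ^2*y^2)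
      linarith
    have hAx : -(β/4)*y^2 ≤ A * x := by
      have h := mul_le_mul_of_nonneg_left hreg hA.le
      have e : A*κ*y^2 = β/4*y^2 := by rw [hAκ]
      nlinarith
    have h1 : β * x^2 ≤ β * (κ^2*δ^2*y^2) := mul_le_mul_of_nonneg_left hx2' hβ.le
    have h1' : β * (κ^2*δ^2*y^2) ≤ β * (κ^2*δ*y^2) := by
      have := mul_le_mul_of_nonneg_left hδ2 (by positivity : (0:ℝ) ≤ β*(κ^2*y^2))
      nlinarith
    have h2 : Cr*δ*x^2 ≤ Cr*δ*(κ^2*δ^2*y^2) := mul_le_mul_of_nonneg_left hx2' (by positivity)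
    have h2' : Cr*δ*(κ^2*δ^2*y^2) ≤ Cr*(κ^2*δ*y^2) := by
      have := mul_le_mul_of_nonneg_left hδ3 (by positivity : (0:ℝ) ≤ Cr*(κ^2*y^2))
      nlinarith
    have h3 : ((β+Cr)*κ^2+Cr+1)*δ*y^2 ≤ β/2*y^2 := mul_le_mul_of_nonneg_right hδC (sq_nonneg y)
    have h4 : c * y^2 ≤ β/4 * y^2 := mul_le_mul_of_nonneg_right hc2 (sq_nonneg y)
    have h5 : 0 ≤ δ*y^2 := mul_nonneg hδ.le (sq_nonneg y)
    have h6 : 0 ≤ Cr*δ*y^2 := by positivity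
    linarith

/-- Lemma 3.3 (ii)(c), abstract version: if `λ` is analytic near `0`, real on the reals,
with `λ(0) = 0`, `λ'(0) > 0`, `λ''(0) < 0`, then there are `C, δ, κ⋆ > 0` such that
`λ(s) ≠ 0` and `|λ(s)|² ≤ C Re λ(s)` whenever `0 < |s| ≤ δ` and `Re s ≥ −κ⋆ (Im s)²`. -/
theorem stmt_11 (f : ℂ → ℂ) (U : Set ℂ) (hU : IsOpen U) (h0 : (0 : ℂ) ∈ U)
    (hf : ∀ z ∈ U, AnalyticAt ℂ f z)
    (hreal : ∀ s : ℝ, (s : ℂ) ∈ U → (f s).im = 0)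
    (hf0 : f 0 = 0)
    (hd1 : 0 < (deriv f 0).re)
    (hd2 : (deriv (deriv f) 0).re < 0) :
    ∃ C : ℝ, 0 < C ∧ ∃ δ : ℝ, 0 < δ ∧ ∃ κ : ℝ, 0 < κ ∧
      ∀ s : ℂ, s ≠ 0 → ‖s‖ ≤ δ → -κ * s.im ^ 2 ≤ s.re →
        f s ≠ 0 ∧ ‖f s‖ ^ 2 ≤ C * (f s).re := by
  have hdiff : ∀ z ∈ U, DifferentiableAt ℂ f z := fun z hz => (hf z hz).differentiableAt
  have h0' : ((0:ℝ):ℂ) ∈ U := by simpa using h0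
  have haim : (deriv f 0).im = 0 := by
    simpa using im_deriv_eq_zero f U hU hdiff hreal 0 h0'
  have hfd : AnalyticOnNhd ℂ (deriv f) U := AnalyticOnNhd.deriv (fun z hz => hf z hz)
  have hbim : (deriv (deriv f) 0).im = 0 := by
    simpa using im_deriv_eq_zero (deriv f) U hU (fun z hz => (hfd z hz).differentiableAt)
      (fun t ht => im_deriv_eq_zero f U hU hdiff hreal t ht) 0 h0'
  obtain ⟨p, hp⟩ := hf 0 h0
  set a := deriv f 0 with ha
  set b := deriv (deriv f) 0 with hb
  set c₂ := p.coeff 2 with hc₂def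
  have hca : p.coeff 1 = a := hp.deriv.symm
  have hcb : (2:ℂ) * c₂ = b := by
    obtain ⟨r, hball⟩ := hp
    have h2 := hball.factorial_smul (1:ℂ) 2
    rw [← iteratedDeriv_eq_iteratedFDeriv] at h2
    have e1 : iteratedDeriv 2 f 0 = b := by
      rw [show (2:ℕ) = 1 + 1 from rfl, iteratedDeriv_succ, iteratedDeriv_one, hb]
    have e2 : (p 2 fun _ => (1:ℂ)) = c₂ := by
      rw [FormalMultilinearSeries.apply_eq_pow_smul_coeff]; simp [hc₂def]
    rw [e1, e2] at h2
    rw [← h2]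
    simp [Nat.factorial]
  have hc₂re : c₂.re = b.re / 2 := by
    have h := congrArg Complex.re hcb
    rw [Complex.mul_re] at h
    norm_num at h
    linarith only [h]
  have hc₂im : c₂.im = 0 := by
    have h := congrArg Complex.im hcb
    rw [Complex.mul_im] at h
    norm_num at h
    rw [hbim] at h
    linarith only [h]
  have hc0 : p.coeff 0 = 0 := by
    have h := hp.coeff_zero (fun _ => (1:ℂ))
    rw [hf0] at h
    exact h
  -- Taylor remainder
  have hO := hp.isBigO_sub_partialSum_pow 3
  rw [Asymptotics.isBigO_iff] at hO
  obtain ⟨C0, hC0⟩ := hO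
  rw [Metric.eventually_nhds_iff] at hC0
  obtain ⟨ρ, hρ, hCb⟩ := hC0
  set Cr := max C0 0 with hCrdef
  have hCrn : (0:ℝ) ≤ Cr := le_max_right _ _
  have hps : ∀ s : ℂ, p.partialSum 3 s = a*s + c₂*s^2 := by
    intro s
    simp [FormalMultilinearSeries.partialSum, Finset.sum_range_succ,
      FormalMultilinearSeries.apply_eq_pow_smul_coeff, hc0, hca, ← hc₂def, smul_eq_mul]
    ring
  have hrem : ∀ s : ℂ, ‖s‖ < ρ → ‖f s - (a*s + c₂*s^2)‖ ≤ Cr * ‖s‖^3 := by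
    intro s hsρ
    have h := hCb (y := s) (by simpa [dist_eq_norm] using hsρ)
    rw [zero_add, hps s] at h
    calc ‖f s - (a*s + c₂*s^2)‖ ≤ C0 * ‖‖s‖^3‖ := h
      _ = C0 * ‖s‖^3 := by rw [Real.norm_of_nonneg (by positivity : (0:ℝ) ≤ ‖s‖^3)]
      _ ≤ Cr * ‖s‖^3 := mul_le_mul_of_nonneg_right (le_max_left _ _) (by positivity)
  -- constants
  set A := a.re with hAdef
  have hA : 0 < A := hd1
  set β : ℝ := -(b.re)/2 with hβdef
  have hβ : 0 < β := by rw [hβdef]; linarith only [hd2]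
  have hc₂re' : c₂.re = -β := by rw [hc₂re, hβdef]; ring
  obtain ⟨c, hc, δ0, hδ0, hδ01, hcore⟩ := core_est A β Cr hA hβ hCrn
  set κ : ℝ := β/(4*A) with hκdef
  have hκ : 0 < κ := by positivity
  set δ := min δ0 (ρ/2) with hδdef
  have hδ : 0 < δ := lt_min hδ0 (by linarith only [hρ])
  have hδδ0 : δ ≤ δ0 := min_le_left _ _
  have hδ1 : δ ≤ 1 := hδδ0.trans hδ01
  set M : ℝ := ‖a‖ + ‖c₂‖ + Cr with hMdef
  have haA : A ≤ ‖a‖ := le_trans (le_abs_self _) (Complex.abs_re_le_norm a)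
  have hMpos : 0 < M := by
    have h' := norm_nonneg c₂
    rw [hMdef]; linarith only [haA, hA, h', hCrn]
  set K : ℝ := δ + 1 + κ^2*δ^2 with hKdef
  have hKpos : 0 < K := by positivity
  refine ⟨M^2*K/c, div_pos (mul_pos (pow_pos hMpos 2) hKpos) hc, δ, hδ, κ, hκ, ?_⟩
  intro s hs hsd hsreg
  set x := s.re with hx
  set y := s.im with hy
  have habs2 : (‖s‖)^2 = x^2 + y^2 := by
    rw [Complex.sq_norm, Complex.normSq_apply]; ring
  have hsn : ‖s‖ = ‖s‖ := rfl
  have hsρ : ‖s‖ < ρ := by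
    rw [hsn]
    calc ‖s‖ ≤ δ := hsd
      _ ≤ ρ/2 := min_le_right _ _
      _ < ρ := by linarith only [hρ]
  have hrem' := hrem s hsρ
  have hs2 : x^2 + y^2 ≤ δ^2 := by
    rw [← habs2]
    exact pow_le_pow_left₀ (norm_nonneg s) hsd 2
  -- real part of the quadratic polynomial
  have hre_poly : (a*s + c₂*s^2).re = A*x - β*x^2 + β*y^2 := by
    have e : (a*s + c₂*s^2).re
        = a.re*s.re - a.im*s.im + (c₂.re*(s*s).re - c₂.im*(s*s).im) := by
      simp [Complex.add_re, Complex.mul_re, sq]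
    rw [e, haim, hc₂im, hc₂re', Complex.mul_re, Complex.mul_im, hAdef]
    ring
  have hre_ge : A*x - β*x^2 + β*y^2 - Cr*δ*(x^2+y^2) ≤ (f s).re := by
    have h1 : |(f s - (a*s+c₂*s^2)).re| ≤ Cr*‖s‖^3 :=
      (Complex.abs_re_le_norm _).trans hrem'
    have h2 : ‖s‖^3 ≤ δ*(x^2+y^2) := by
      have e3 : ‖s‖^3 = (x^2+y^2) * ‖s‖ := by
        rw [hsn, show (‖s‖)^3 = (‖s‖)^2 * ‖s‖ by ring, habs2]
      rw [e3]
      have := mul_le_mul_of_nonneg_left (hsn ▸ hsd) (by positivity : (0:ℝ) ≤ x^2+y^2)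
      linarith only [this]
    have h3 : Cr*‖s‖^3 ≤ Cr*δ*(x^2+y^2) := by
      rw [mul_assoc]
      exact mul_le_mul_of_nonneg_left h2 hCrn
    rw [Complex.sub_re, hre_poly] at h1
    have h4 := (abs_le.mp h1).1
    linarith only [h3, h4]
  have hcore' := hcore δ x y hδ hδδ0 hs2 hsreg
  have hRe : c*(max x 0 + y^2) ≤ (f s).re := hcore'.trans hre_ge
  have hposmax : 0 < max x 0 + y^2 := by
    rcases eq_or_ne y 0 with hy0 | hy0
    · have hx0 : x ≠ 0 := by
        intro hx0
        exact hs (Complex.ext hx0 hy0)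
      have hxpos : 0 < x := by
        have : -κ * y^2 ≤ x := hsreg
        rw [hy0] at this
        simp at this
        exact lt_of_le_of_ne this (Ne.symm hx0)
      rw [max_eq_left hxpos.le, hy0]
      positivity
    · have h1 : 0 < y^2 := by positivity
      have h2 : (0:ℝ) ≤ max x 0 := le_max_right _ _
      linarith only [h1, h2]
  have hfre : 0 < (f s).re := lt_of_lt_of_le (mul_pos hc hposmax) hRe
  constructor
  · intro h
    rw [h] at hfre
    simp at hfre
  · have habsf : ‖f s‖ ≤ M * ‖s‖ := by
      have h1 : ‖f s‖ ≤ ‖a*s + c₂*s^2‖ + Cr*‖s‖^3 := by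
        calc ‖f s‖ = ‖(f s - (a*s+c₂*s^2)) + (a*s+c₂*s^2)‖ := by
              rw [sub_add_cancel]
          _ ≤ ‖f s - (a*s+c₂*s^2)‖ + ‖a*s+c₂*s^2‖ := norm_add_le _ _
          _ ≤ Cr*‖s‖^3 + ‖a*s+c₂*s^2‖ := by
              have e : ‖a*s+c₂*s^2‖ = ‖a*s+c₂*s^2‖ := rfl
              linarith only [hrem', e]
          _ = ‖a*s + c₂*s^2‖ + Cr*‖s‖^3 := by ring
      have h2 : ‖a*s + c₂*s^2‖
          ≤ ‖a‖ * ‖s‖ + ‖c₂‖ * (‖s‖)^2 := by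
        calc ‖a*s + c₂*s^2‖
            ≤ ‖a*s‖ + ‖c₂*s^2‖ := norm_add_le _ _
          _ = ‖a‖ * ‖s‖ + ‖c₂‖ * (‖s‖)^2 := by
              simp [map_mul, map_pow]
      have hab1 : ‖s‖ ≤ 1 := hsd.trans hδ1
      have habn : 0 ≤ ‖s‖ := norm_nonneg s
      have h3 : (‖s‖)^2 ≤ ‖s‖ := by
        calc (‖s‖)^2 = ‖s‖ * ‖s‖ := by ring
          _ ≤ 1 * ‖s‖ := mul_le_mul_of_nonneg_right hab1 habn
          _ = ‖s‖ := one_mul _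
      have h4 : ‖s‖^3 ≤ ‖s‖ := by
        rw [hsn]
        calc (‖s‖)^3 = (‖s‖)^2 * ‖s‖ := by ring
          _ ≤ ‖s‖ * ‖s‖ := mul_le_mul_of_nonneg_right h3 habn
          _ ≤ 1 * ‖s‖ := mul_le_mul_of_nonneg_right hab1 habn
          _ = ‖s‖ := one_mul _
      have h5 : ‖c₂‖ * (‖s‖)^2 ≤ ‖c₂‖ * ‖s‖ :=
        mul_le_mul_of_nonneg_left h3 (norm_nonneg c₂)
      have h6 : Cr*‖s‖^3 ≤ Cr * ‖s‖ := mul_le_mul_of_nonneg_left h4 hCrn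
      rw [hsn] at h1 h6
      rw [hMdef]
      linarith only [h1, h2, h5, h6]
    have hsq : ‖f s‖^2 ≤ M^2*(x^2+y^2) := by
      have h := mul_self_le_mul_self (norm_nonneg (f s)) habsf
      calc ‖f s‖^2 = ‖f s‖ * ‖f s‖ := by ring
        _ ≤ (M*‖s‖)*(M*‖s‖) := h
        _ = M^2*(‖s‖)^2 := by ring
        _ = M^2*(x^2+y^2) := by rw [habs2]
    have hxy : x^2 + y^2 ≤ K*(max x 0 + y^2) := by
      have hmax0 : (0:ℝ) ≤ max x 0 := le_max_right _ _
      have hy2d : y^2 ≤ δ^2 := by linarith only [hs2, sq_nonneg x]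
      rcases le_or_gt 0 x with hx0 | hx0
      · have hxδ : x ≤ δ := le_of_pow_le_pow_left₀ two_ne_zero hδ.le
          (by linarith only [hs2, sq_nonneg y] : x^2 ≤ δ^2)
        have hxsq : x^2 ≤ δ*x := by
          have t := mul_le_mul_of_nonneg_right hxδ hx0
          linarith only [t]
        rw [max_eq_left hx0, hKdef]
        have t1 : 0 ≤ (1+κ^2*δ^2)*x := mul_nonneg (by positivity) hx0
        have t2 : 0 ≤ (δ+κ^2*δ^2)*y^2 := mul_nonneg (by positivity) (sq_nonneg y)
        linarith only [t1, t2, hxsq, sq_nonneg y]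
      · have hnx : -x ≤ κ*y^2 := by linarith only [hsreg]
        have hxsq : x^2 ≤ κ^2*y^2*y^2 := by
          have t := mul_self_le_mul_self (neg_nonneg.2 hx0.le) hnx
          linarith only [t]
        have hxsq' : x^2 ≤ κ^2*δ^2*y^2 := by
          have t := mul_le_mul_of_nonneg_left hy2d (by positivity : (0:ℝ) ≤ κ^2*y^2)
          linarith only [t, hxsq]
        rw [max_eq_right hx0.le, hKdef]
        have t3 : 0 ≤ δ*y^2 := mul_nonneg hδ.le (sq_nonneg y)
        linarith only [hxsq', t3]
    calc ‖f s‖^2 ≤ M^2*(x^2+y^2) := hsq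
      _ ≤ M^2*(K*(max x 0 + y^2)) :=
          mul_le_mul_of_nonneg_left hxy (by positivity)
      _ = (M^2*K/c)*(c*(max x 0 + y^2)) := by field_simp
      _ ≤ (M^2*K/c)*(f s).re :=
          mul_le_mul_of_nonneg_left hRe (le_of_lt (div_pos (mul_pos (pow_pos hMpos 2) hKpos) hc))
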